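/- Conditional third moment of the ERW martingale differences: for every k ≥ 2, almost surely E[ (ΔM_k)³ | F_{k−1} ] = 2(2p−1) a_k³ ( −T_{k−1}/(k−1) + (2p−1)² T_{k−1}³/(k−1)³ ); in particular |E[ (ΔM_k)³ | F_{k−1} ]| ≤ 4 a_k³ |T_{k−1}/(k−1)| almost surely. -/

import Mathlib

open MeasureTheory ProbabilityTheory Filter Set
open scoped ENNReal

/-- The weights `aₙ = Γ(n)Γ(2p)/Γ(n+2p−1)` of the elephant random walk
(note that the formula also gives `a₁ = 1`). -/
noncomputable def erwA (p : ℝ) (n : ℕ) : ℝ :=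
  Real.Gamma n * Real.Gamma (2 * p) / Real.Gamma ((n : ℝ) + 2 * p - 1)

/-- `vₙ = Σ_{i=1}^n aᵢ²`. -/
noncomputable def erwV (p : ℝ) (n : ℕ) : ℝ :=
  ∑ i ∈ Finset.Icc 1 n, (erwA p i) ^ 2

/-- The martingale `M₀ = 0`, `Mₙ = aₙTₙ − (2q−1)` where `Tₙ = Σ_{i=1}^n Xᵢ`. -/
noncomputable def erwM {Ω : Type*} (p q : ℝ) (X : ℕ → Ω → ℝ) (n : ℕ) (ω : Ω) : ℝ :=
  if n = 0 then 0 else erwA p n * (∑ i ∈ Finset.Icc 1 n, X i ω) - (2 * q - 1)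

/-- The filtration `F₀` trivial, `Fₙ = σ(X₁, αᵢ, βᵢ : 2 ≤ i ≤ n)`. -/
noncomputable def erwFilt {Ω : Type*} (X A : ℕ → Ω → ℝ) (B : ℕ → Ω → ℕ) (n : ℕ) :
    MeasurableSpace Ω :=
  if n = 0 then ⊥ else
    MeasurableSpace.comap (X 1) inferInstance ⊔
      ⨆ i ∈ Set.Icc 2 n,
        (MeasurableSpace.comap (A i) inferInstance ⊔ MeasurableSpace.comap (B i) inferInstance)


set_option linter.unusedSectionVars false
set_option maxHeartbeats 1000000

noncomputable def erwX' {Ω : Type} (X A : ℕ → Ω → ℝ) (B : ℕ → Ω → ℕ) : ℕ → Ω → ℝ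
  | 0 => X 0
  | 1 => X 1
  | (m+2) => fun ω => A (m+2) ω *
      ∑ j ∈ (Finset.Icc 1 (m+1)).attach,
        if B (m+2) ω = j.1 then erwX' X A B j.1 ω else 0
  termination_by n => n
  decreasing_by
    have := j.2; simp only [Finset.mem_Icc] at this; omega


section Aux
variable {Ω : Type} [mΩ : MeasurableSpace Ω] {X A : ℕ → Ω → ℝ} {B : ℕ → Ω → ℕ}

lemma comapX1_le {n : ℕ} (hn : 1 ≤ n) :
    MeasurableSpace.comap (X 1) inferInstance ≤ erwFilt X A B n := by
  rw [erwFilt, if_neg (by omega)]; exact le_sup_left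

lemma comapA_le {i n : ℕ} (h2 : 2 ≤ i) (hin : i ≤ n) :
    MeasurableSpace.comap (A i) inferInstance ≤ erwFilt X A B n := by
  rw [erwFilt, if_neg (by omega)]
  refine le_trans ?_ le_sup_right
  exact le_trans le_sup_left (le_biSup
    (fun i => MeasurableSpace.comap (A i) inferInstance ⊔ MeasurableSpace.comap (B i) inferInstance)
    (show i ∈ Set.Icc 2 n from ⟨h2, hin⟩))

lemma comapB_le {i n : ℕ} (h2 : 2 ≤ i) (hin : i ≤ n) :
    MeasurableSpace.comap (B i) inferInstance ≤ erwFilt X A B n := by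
  rw [erwFilt, if_neg (by omega)]
  refine le_trans ?_ le_sup_right
  exact le_trans le_sup_right (le_biSup
    (fun i => MeasurableSpace.comap (A i) inferInstance ⊔ MeasurableSpace.comap (B i) inferInstance)
    (show i ∈ Set.Icc 2 n from ⟨h2, hin⟩))

lemma erwFilt_mono {m n : ℕ} (h : m ≤ n) : erwFilt X A B m ≤ erwFilt X A B n := by
  rcases Nat.eq_zero_or_pos m with hm | hm
  · subst hm; rw [erwFilt, if_pos rfl]; exact bot_le
  rw [erwFilt, if_neg (by omega), erwFilt, if_neg (by omega)]
  refine sup_le_sup le_rfl ?_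
  exact biSup_mono fun i hi => ⟨hi.1, hi.2.trans h⟩

lemma erwFilt_le (hX : Measurable (X 1)) (hA : ∀ i, Measurable (A i))
    (hB : ∀ i, Measurable (B i)) (n : ℕ) : erwFilt X A B n ≤ mΩ := by
  rw [erwFilt]
  split
  · exact bot_le
  refine sup_le hX.comap_le (iSup₂_le fun i _ => sup_le (hA i).comap_le (hB i).comap_le)

lemma measurable_comap_self {α β : Type*} [mβ : MeasurableSpace β] (f : α → β) :
    @Measurable α β (MeasurableSpace.comap f mβ) mβ f := fun s hs => ⟨s, hs, rfl⟩

lemma erwX'_measurable : ∀ n : ℕ, 1 ≤ n → Measurable[erwFilt X A B n] (erwX' X A B n) := by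
  intro n
  induction n using Nat.strong_induction_on with
  | _ n ih =>
    intro hn
    match n, hn with
    | 1, _ =>
      rw [show erwX' X A B 1 = X 1 by rw [erwX']]
      exact (measurable_comap_self (X 1)).mono (comapX1_le le_rfl) le_rfl
    | (m+2), _ =>
      rw [show erwX' X A B (m+2) = fun ω => A (m+2) ω *
          ∑ j ∈ (Finset.Icc 1 (m+1)).attach,
            if B (m+2) ω = j.1 then erwX' X A B j.1 ω else 0 by rw [erwX']]
      refine Measurable.mul ?_ ?_
      · exact (measurable_comap_self (A (m+2))).mono (comapA_le (by omega) le_rfl) le_rfl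
      refine Finset.measurable_sum _ fun j _ => ?_
      have hj := j.2
      simp only [Finset.mem_Icc] at hj
      have hBmeas : Measurable[erwFilt X A B (m+2)] (B (m+2)) :=
        (measurable_comap_self (B (m+2))).mono (comapB_le (by omega) le_rfl) le_rfl
      have hset : MeasurableSet[erwFilt X A B (m+2)] {ω | B (m+2) ω = j.1} :=
        hBmeas (measurableSet_singleton j.1)
      have hXj : Measurable[erwFilt X A B (m+2)] (erwX' X A B j.1) :=
        (ih j.1 (by omega) hj.1).mono (erwFilt_mono (by omega)) le_rfl
      exact Measurable.ite hset hXj measurable_const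

lemma erwX'_measurable_le {j n : ℕ} (hj : 1 ≤ j) (hjn : j ≤ n) :
    Measurable[erwFilt X A B n] (erwX' X A B j) :=
  (erwX'_measurable j hj).mono (erwFilt_mono hjn) le_rfl

end Aux

section Aux2
variable {Ω : Type} [mΩ : MeasurableSpace Ω] {μ : Measure Ω} [IsProbabilityMeasure μ]

lemma ae_pm_one {f : Ω → ℝ} (hf : Measurable f) {r : ℝ} (hr0 : 0 ≤ r) (hr1 : r ≤ 1)
    (h1 : μ {ω | f ω = 1} = ENNReal.ofReal r)
    (h2 : μ {ω | f ω = -1} = ENNReal.ofReal (1 - r)) :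
    ∀ᵐ ω ∂μ, f ω = 1 ∨ f ω = -1 := by
  have hs1 : MeasurableSet {ω | f ω = 1} := hf (measurableSet_singleton 1)
  have hs2 : MeasurableSet {ω | f ω = -1} := hf (measurableSet_singleton (-1))
  have hd : Disjoint {ω | f ω = 1} {ω | f ω = -1} := by
    rw [Set.disjoint_left]; intro ω h1 h2; simp only [mem_setOf_eq] at *; linarith [h1, h2]
  have hu : μ ({ω | f ω = 1} ∪ {ω | f ω = -1}) = 1 := by
    rw [measure_union hd hs2, h1, h2, ← ENNReal.ofReal_add hr0 (by linarith)]
    norm_num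
  have hcompl : μ ({ω | f ω = 1} ∪ {ω | f ω = -1})ᶜ = 0 := by
    rw [measure_compl (hs1.union hs2) (measure_ne_top _ _), hu, measure_univ, tsub_self]
  rw [ae_iff]
  convert hcompl using 2
  ext ω; simp

lemma ae_B_mem {B : ℕ → Ω → ℕ} {i : ℕ} (hi : 2 ≤ i) (hBm : Measurable (B i))
    (hB : ∀ k ∈ Finset.Icc 1 (i - 1), μ {ω | B i ω = k} = (((i - 1 : ℕ) : ℝ≥0∞))⁻¹) :
    ∀ᵐ ω ∂μ, B i ω ∈ Finset.Icc 1 (i - 1) := by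
  have hmeas : ∀ k : ℕ, MeasurableSet {ω | B i ω = k} :=
    fun k => hBm (measurableSet_singleton k)
  have hu : μ (⋃ k ∈ Finset.Icc 1 (i - 1), {ω | B i ω = k}) = 1 := by
    rw [measure_biUnion_finset ?hd fun k _ => hmeas k]
    · have : ∀ k ∈ Finset.Icc 1 (i - 1), μ {ω | B i ω = k} = (((i - 1 : ℕ) : ℝ≥0∞))⁻¹ := hB
      rw [Finset.sum_congr rfl this, Finset.sum_const, Nat.card_Icc]
      simp only [Nat.add_sub_cancel, nsmul_eq_mul]
      rw [ENNReal.mul_inv_cancel]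
      · exact Nat.cast_ne_zero.2 (by omega)
      · exact ENNReal.natCast_ne_top _
    case hd =>
      intro a _ b _ hab
      rw [Function.onFun, Set.disjoint_left]
      intro ω ha hb
      simp only [mem_setOf_eq] at ha hb
      exact hab (ha ▸ hb ▸ rfl)
  have hcompl : μ (⋃ k ∈ Finset.Icc 1 (i - 1), {ω | B i ω = k})ᶜ = 0 := by
    rw [measure_compl (Finset.measurableSet_biUnion _ fun k _ => hmeas k) (measure_ne_top _ _),
      hu, measure_univ, tsub_self]
  rw [ae_iff]
  convert hcompl using 2
  ext ω
  simp only [mem_setOf_eq, Set.mem_compl_iff, Set.mem_iUnion, Finset.mem_Icc, not_exists]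
  constructor
  · intro h j hj hBj
    subst hBj
    exact absurd hj (by omega)
  · intro h hmem
    exact h _ hmem rfl

lemma integral_pm_one {f : Ω → ℝ} (hf : Measurable f) {r : ℝ} (hr0 : 0 ≤ r) (hr1 : r ≤ 1)
    (h1 : μ {ω | f ω = 1} = ENNReal.ofReal r)
    (h2 : μ {ω | f ω = -1} = ENNReal.ofReal (1 - r))
    (hae : ∀ᵐ ω ∂μ, f ω = 1 ∨ f ω = -1) :
    ∫ ω, f ω ∂μ = 2 * r - 1 := by
  have hs1 : MeasurableSet {ω | f ω = 1} := hf (measurableSet_singleton 1)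
  have hs2 : MeasurableSet {ω | f ω = -1} := hf (measurableSet_singleton (-1))
  have hfeq : f =ᵐ[μ] fun ω => Set.indicator {ω | f ω = 1} (fun _ => (1:ℝ)) ω +
      Set.indicator {ω | f ω = -1} (fun _ => (-1:ℝ)) ω := by
    filter_upwards [hae] with ω hω
    rcases hω with h | h
    · rw [Set.indicator_of_mem (show ω ∈ {ω | f ω = 1} from h),
        Set.indicator_of_notMem (show ω ∉ {ω | f ω = -1} by simp only [mem_setOf_eq, h]; norm_num)]
      rw [h]; norm_num
    · rw [Set.indicator_of_mem (show ω ∈ {ω | f ω = -1} from h),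
        Set.indicator_of_notMem (show ω ∉ {ω | f ω = 1} by simp only [mem_setOf_eq, h]; norm_num)]
      rw [h]; norm_num
  rw [integral_congr_ae hfeq, integral_add ((integrable_const _).indicator hs1)
    ((integrable_const _).indicator hs2), integral_indicator_const _ hs1,
    integral_indicator_const _ hs2, measureReal_def, measureReal_def, h1, h2, ENNReal.toReal_ofReal hr0,
    ENNReal.toReal_ofReal (by linarith)]
  simp only [smul_eq_mul]
  ring

section Aux3
variable {Ω : Type} {X A : ℕ → Ω → ℝ} {B : ℕ → Ω → ℕ}

lemma erwX'_spec (hXrec : ∀ n, 2 ≤ n → ∀ ω, X n ω = A n ω * X (B n ω) ω) (ω : Ω)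
    (hX1 : X 1 ω = 1 ∨ X 1 ω = -1)
    (hgood : ∀ i, 2 ≤ i → (A i ω = 1 ∨ A i ω = -1) ∧ B i ω ∈ Finset.Icc 1 (i - 1)) :
    ∀ m, 1 ≤ m → erwX' X A B m ω = X m ω ∧ |X m ω| = 1 := by
  intro m
  induction m using Nat.strong_induction_on with
  | _ m ih =>
    intro hm
    match m, hm with
    | 1, _ =>
      refine ⟨by rw [erwX'], ?_⟩
      rcases hX1 with h | h <;> rw [h] <;> norm_num
    | (j+2), _ =>
      obtain ⟨hA, hBmem⟩ := hgood (j+2) (by omega)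
      simp only [Nat.add_sub_cancel, Finset.mem_Icc] at hBmem
      set b := B (j+2) ω with hb
      have hsum : (∑ j' ∈ (Finset.Icc 1 (j+1)).attach,
          if B (j+2) ω = j'.1 then erwX' X A B j'.1 ω else 0) = erwX' X A B b ω := by
        rw [Finset.sum_attach (Finset.Icc 1 (j+1))
          (fun j' => if B (j+2) ω = j' then erwX' X A B j' ω else 0)]
        rw [← hb, Finset.sum_ite_eq (Finset.Icc 1 (j+1)) b (fun j' => erwX' X A B j' ω)]
        rw [if_pos (Finset.mem_Icc.2 ⟨hBmem.1, by omega⟩)]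
      have hib := ih b (by omega) hBmem.1
      have hXrec' := hXrec (j+2) (by omega) ω
      have hunfold : erwX' X A B (j+2) ω = A (j+2) ω *
          ∑ j' ∈ (Finset.Icc 1 (j+1)).attach,
            if B (j+2) ω = j'.1 then erwX' X A B j'.1 ω else 0 := by rw [erwX']
      constructor
      · rw [hunfold, hsum, hib.1, hXrec']
      · rw [hXrec', abs_mul, ← hb, hib.2, mul_one]
        rcases hA with h | h <;> rw [h] <;> norm_num

lemma erwA_pos {p : ℝ} (hp : 0 < p) {n : ℕ} (hn : 1 ≤ n) : 0 < erwA p n := by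
  have h1 : (0 : ℝ) < n := by exact_mod_cast hn
  have h2 : (0 : ℝ) < 2 * p := by linarith
  have h3 : (0 : ℝ) < (n : ℝ) + 2 * p - 1 := by
    have : (1 : ℝ) ≤ n := by exact_mod_cast hn
    linarith
  exact div_pos (mul_pos (Real.Gamma_pos_of_pos h1) (Real.Gamma_pos_of_pos h2))
    (Real.Gamma_pos_of_pos h3)

lemma erwA_rec {p : ℝ} (hp : 0 < p) {k : ℕ} (hk : 2 ≤ k) :
    ((k : ℝ) + 2 * p - 2) * erwA p k = ((k : ℝ) - 1) * erwA p (k - 1) := by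
  have hc : ((k - 1 : ℕ) : ℝ) = (k : ℝ) - 1 := by
    rw [Nat.cast_sub (by omega)]; norm_num
  have hk1 : (2 : ℝ) ≤ (k : ℝ) := by exact_mod_cast hk
  have hGk : Real.Gamma (k : ℝ) = ((k : ℝ) - 1) * Real.Gamma ((k : ℝ) - 1) := by
    have := Real.Gamma_add_one (show (k : ℝ) - 1 ≠ 0 by intro h; nlinarith)
    rw [show (k : ℝ) - 1 + 1 = (k : ℝ) by ring] at this
    exact this
  have hG2 : Real.Gamma ((k : ℝ) + 2 * p - 1) =
      ((k : ℝ) + 2 * p - 2) * Real.Gamma ((k : ℝ) + 2 * p - 2) := by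
    have := Real.Gamma_add_one (show (k : ℝ) + 2 * p - 2 ≠ 0 by intro h; nlinarith)
    rw [show (k : ℝ) + 2 * p - 2 + 1 = (k : ℝ) + 2 * p - 1 by ring] at this
    exact this
  have hpos1 : 0 < Real.Gamma ((k : ℝ) + 2 * p - 1) := Real.Gamma_pos_of_pos (by nlinarith)
  have hpos2 : 0 < Real.Gamma ((k : ℝ) + 2 * p - 2) := Real.Gamma_pos_of_pos (by nlinarith)
  rw [erwA, erwA, hc, show ((k : ℝ) - 1) + 2 * p - 1 = (k : ℝ) + 2 * p - 2 by ring, hGk, hG2]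
  have h1 : Real.Gamma ((k : ℝ) + 2 * p - 2) ≠ 0 := hpos2.ne'
  have h2 : (k : ℝ) + 2 * p - 2 ≠ 0 := by nlinarith
  field_simp


end Aux3


section AuxInd
variable {Ω : Type} [mΩ : MeasurableSpace Ω]

/-- The ERW sigma-algebra family indexed by `Unit ⊕ ℕ ⊕ ℕ`. -/
noncomputable def erwFam (X A : ℕ → Ω → ℝ) (B : ℕ → Ω → ℕ) :
    Unit ⊕ ℕ ⊕ ℕ → MeasurableSpace Ω :=
  Sum.elim (fun _ : Unit => MeasurableSpace.comap (X 1) inferInstance)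
    (Sum.elim (fun k : ℕ => MeasurableSpace.comap (A (k + 2)) inferInstance)
      (fun k : ℕ => MeasurableSpace.comap (B (k + 2)) inferInstance))

lemma erwFilt_le_biSup (X A : ℕ → Ω → ℝ) (B : ℕ → Ω → ℕ) (n : ℕ)
    (s : Set (Unit ⊕ ℕ ⊕ ℕ)) (h1 : Sum.inl () ∈ s)
    (h2 : ∀ i, 2 ≤ i → i ≤ n → Sum.inr (Sum.inl (i - 2)) ∈ s)
    (h3 : ∀ i, 2 ≤ i → i ≤ n → Sum.inr (Sum.inr (i - 2)) ∈ s) :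
    erwFilt X A B n ≤ ⨆ i ∈ s, erwFam X A B i := by
  rw [erwFilt]
  split
  · exact bot_le
  refine sup_le ?_ (iSup₂_le fun i hi => ?_)
  · exact le_trans (le_of_eq rfl) (le_biSup (erwFam X A B) h1)
  · obtain ⟨hi2, hin⟩ := hi
    refine sup_le ?_ ?_
    · refine le_trans (le_of_eq ?_) (le_biSup (erwFam X A B) (h2 i hi2 hin))
      simp only [erwFam, Sum.elim_inr, Sum.elim_inl, Nat.sub_add_cancel hi2]
    · refine le_trans (le_of_eq ?_) (le_biSup (erwFam X A B) (h3 i hi2 hin))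
      simp only [erwFam, Sum.elim_inr, Nat.sub_add_cancel hi2]

end AuxInd

/-- Conditional third moment of the ERW martingale differences: for every `k ≥ 2`, almost surely
`E[(ΔM_k)³ | F_{k−1}] = 2(2p−1) a_k³ (−T_{k−1}/(k−1) + (2p−1)² T_{k−1}³/(k−1)³)`; in particular
`|E[(ΔM_k)³ | F_{k−1}]| ≤ 4 a_k³ |T_{k−1}/(k−1)|` almost surely. -/
theorem erw_cond_third_moment
    (p q : ℝ) (hp : p ∈ Set.Ioc (0 : ℝ) 1) (hq : q ∈ Set.Ioc (0 : ℝ) 1)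
    {Ω : Type} [MeasurableSpace Ω] (μ : Measure Ω) [IsProbabilityMeasure μ]
    (X A : ℕ → Ω → ℝ) (B : ℕ → Ω → ℕ)
    (hXmeas : ∀ n, Measurable (X n)) (hAmeas : ∀ n, Measurable (A n))
    (hBmeas : ∀ n, Measurable (B n))
    (hX1 : μ {ω | X 1 ω = 1} = ENNReal.ofReal q)
    (hX1' : μ {ω | X 1 ω = -1} = ENNReal.ofReal (1 - q))
    (hA : ∀ n, 2 ≤ n → μ {ω | A n ω = 1} = ENNReal.ofReal p)
    (hA' : ∀ n, 2 ≤ n → μ {ω | A n ω = -1} = ENNReal.ofReal (1 - p))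
    (hB : ∀ n, 2 ≤ n → ∀ k ∈ Finset.Icc 1 (n - 1),
      μ {ω | B n ω = k} = (((n - 1 : ℕ) : ℝ≥0∞))⁻¹)
    (hXrec : ∀ n, 2 ≤ n → ∀ ω, X n ω = A n ω * X (B n ω) ω)
    (hindep : iIndep (Sum.elim (fun _ : Unit => MeasurableSpace.comap (X 1) inferInstance)
        (Sum.elim (fun k : ℕ => MeasurableSpace.comap (A (k + 2)) inferInstance)
          (fun k : ℕ => MeasurableSpace.comap (B (k + 2)) inferInstance))) μ)
    :
    ∀ k : ℕ, 2 ≤ k →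
      (μ[fun ω => (erwM p q X k ω - erwM p q X (k - 1) ω) ^ 3 | erwFilt X A B (k - 1)]
        =ᵐ[μ] fun ω =>
          2 * (2 * p - 1) * erwA p k ^ 3 *
            (-((∑ i ∈ Finset.Icc 1 (k - 1), X i ω) / ((k : ℝ) - 1)) +
              (2 * p - 1) ^ 2 * (∑ i ∈ Finset.Icc 1 (k - 1), X i ω) ^ 3 / ((k : ℝ) - 1) ^ 3)) ∧
      (∀ᵐ ω ∂μ,
        abs ((μ[fun ω' => (erwM p q X k ω' - erwM p q X (k - 1) ω') ^ 3 |
              erwFilt X A B (k - 1)]) ω)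
          ≤ 4 * erwA p k ^ 3 * abs ((∑ i ∈ Finset.Icc 1 (k - 1), X i ω) / ((k : ℝ) - 1))) := by
  intro k hk
  have hp0 : 0 < p := hp.1
  have hp1 : p ≤ 1 := hp.2
  set n := k - 1 with hn
  have hn1 : 1 ≤ n := by omega
  have hkn : k = n + 1 := by omega
  have hnR : ((n : ℕ) : ℝ) = (k : ℝ) - 1 := by
    rw [hkn]; push_cast; ring
  have hnpos : (0:ℝ) < (n:ℝ) := by exact_mod_cast hn1
  have hnne : ((n:ℕ) : ℝ) ≠ 0 := ne_of_gt hnpos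
  have hF : erwFilt X A B n ≤ ‹MeasurableSpace Ω› := erwFilt_le (hXmeas 1) hAmeas hBmeas n
  haveI : SigmaFinite (μ.trim hF) := by
    haveI := isFiniteMeasure_trim (μ := μ) hF
    infer_instance
  -- good set
  have haeX1 : ∀ᵐ ω ∂μ, X 1 ω = 1 ∨ X 1 ω = -1 :=
    ae_pm_one (hXmeas 1) hq.1.le hq.2 hX1 hX1'
  have haeA : ∀ᵐ ω ∂μ, ∀ i, 2 ≤ i → (A i ω = 1 ∨ A i ω = -1) := by
    rw [ae_all_iff]
    intro i
    by_cases hi : 2 ≤ i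
    · filter_upwards [ae_pm_one (hAmeas i) hp0.le hp1 (hA i hi) (hA' i hi)] with ω h _
      exact h
    · filter_upwards with ω h; exact absurd h hi
  have haeB : ∀ᵐ ω ∂μ, ∀ i, 2 ≤ i → B i ω ∈ Finset.Icc 1 (i - 1) := by
    rw [ae_all_iff]
    intro i
    by_cases hi : 2 ≤ i
    · filter_upwards [ae_B_mem hi (hBmeas i) (hB i hi)] with ω h _; exact h
    · filter_upwards with ω h; exact absurd h hi
  have hXP : ∀ᵐ ω ∂μ, ∀ m, 1 ≤ m → erwX' X A B m ω = X m ω ∧ |X m ω| = 1 := by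
    filter_upwards [haeX1, haeA, haeB] with ω h1 h2 h3
    exact erwX'_spec hXrec ω h1 (fun i hi => ⟨h2 i hi, h3 i hi⟩)
  -- constants and functions
  set c : ℝ := 2 * p - 1 with hc
  set a : ℝ := erwA p k with hadef
  have hapos : 0 < a := erwA_pos hp0 (by omega)
  have hcabs : |c| ≤ 1 := by rw [abs_le]; constructor <;> [linarith; linarith]
  set T : Ω → ℝ := fun ω => ∑ i ∈ Finset.Icc 1 n, X i ω with hTdef
  set T' : Ω → ℝ := fun ω => ∑ i ∈ Finset.Icc 1 n, erwX' X A B i ω with hT'def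
  set Y : Ω → ℝ := fun ω => max (-1) (min 1 (T' ω / (n:ℝ))) with hYdef
  have hT'F : Measurable[erwFilt X A B n] T' :=
    Finset.measurable_sum _ fun i hi =>
      erwX'_measurable_le (Finset.mem_Icc.mp hi).1 (Finset.mem_Icc.mp hi).2
  have hYF : Measurable[erwFilt X A B n] Y := by
    apply Measurable.max measurable_const
    exact Measurable.min measurable_const (hT'F.div_const _)
  have hT'm : Measurable T' := hT'F.mono hF le_rfl
  have hYm : Measurable Y := hYF.mono hF le_rfl
  have hTm : Measurable T := Finset.measurable_sum _ fun i _ => hXmeas i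
  have hYle : ∀ ω, |Y ω| ≤ 1 := by
    intro ω
    rw [abs_le]
    exact ⟨le_max_left _ _, max_le (by norm_num) (min_le_left _ _)⟩
  have hcp : ∀ m : ℕ, |c|^m ≤ 1 := fun m => pow_le_one₀ (abs_nonneg c) hcabs
  have hyp : ∀ (ω : Ω) (m : ℕ), |Y ω|^m ≤ 1 := fun ω m => pow_le_one₀ (abs_nonneg _) (hYle ω)
  have hmul_le_one : ∀ x z : ℝ, 0 ≤ x → x ≤ 1 → 0 ≤ z → z ≤ 1 → x*z ≤ 1 := by
    intro x z hx h1 hz h2; nlinarith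
  have haeTT' : ∀ᵐ ω ∂μ, T' ω = T ω ∧ |T ω| ≤ (n:ℝ) := by
    filter_upwards [hXP] with ω h
    constructor
    · exact Finset.sum_congr rfl fun i hi => (h i (Finset.mem_Icc.mp hi).1).1
    · calc |T ω| ≤ ∑ i ∈ Finset.Icc 1 n, |X i ω| := Finset.abs_sum_le_sum_abs _ _
        _ = ∑ i ∈ Finset.Icc 1 n, (1:ℝ) :=
          Finset.sum_congr rfl fun i hi => (h i (Finset.mem_Icc.mp hi).1).2
        _ = (n:ℝ) := by simp [Nat.card_Icc]
  have haeY : ∀ᵐ ω ∂μ, Y ω = T ω / (n:ℝ) := by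
    filter_upwards [haeTT'] with ω hω
    have hle : |T ω / (n:ℝ)| ≤ 1 := by
      rw [abs_div, abs_of_pos hnpos, div_le_one hnpos]
      exact hω.2
    rw [abs_le] at hle
    show max (-1) (min 1 (T' ω / (n:ℝ))) = T ω / (n:ℝ)
    rw [hω.1, min_eq_right hle.2, max_eq_right hle.1]
  -- martingale increment identity
  have hrec := erwA_rec hp0 hk
  have hΔ : ∀ ω, erwM p q X k ω - erwM p q X n ω = a * (X k ω - c * (T ω / (n:ℝ))) := by
    intro ω
    rw [erwM, erwM, if_neg (by omega), if_neg (by omega)]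
    have hsum : ∑ i ∈ Finset.Icc 1 k, X i ω = T ω + X k ω := by
      rw [hkn, Finset.sum_Icc_succ_top (by omega : 1 ≤ n + 1)]
    rw [hsum]
    have hkR : (k : ℝ) = (n : ℝ) + 1 := by rw [hkn]; push_cast; ring
    rw [hkR] at hrec
    have hn' : k - 1 = n := rfl
    rw [hn'] at hrec
    field_simp
    linear_combination (T ω) * hrec
  -- independence structure
  have h_le : ∀ i, erwFam X A B i ≤ ‹MeasurableSpace Ω› := by
    rintro (u | j | j)
    · exact (hXmeas 1).comap_le
    · exact (hAmeas _).comap_le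
    · exact (hBmeas _).comap_le
  have hindep' : iIndep (erwFam X A B) μ := hindep
  have hIndA : Indep (MeasurableSpace.comap (A k) inferInstance)
      (MeasurableSpace.comap (B k) inferInstance ⊔ erwFilt X A B n) μ := by
    have h := indep_biSup_compl h_le hindep' {Sum.inr (Sum.inl (k - 2))}
    rw [iSup_singleton] at h
    have hAk : erwFam X A B (Sum.inr (Sum.inl (k - 2))) =
        MeasurableSpace.comap (A k) inferInstance := by
      simp only [erwFam, Sum.elim_inr, Sum.elim_inl, Nat.sub_add_cancel hk]
    rw [hAk] at h
    refine indep_of_indep_of_le_right h (sup_le ?_ ?_)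
    · refine le_trans (le_of_eq ?_) (le_biSup (erwFam X A B)
        (show Sum.inr (Sum.inr (k - 2)) ∈ ({Sum.inr (Sum.inl (k - 2))}ᶜ :
          Set (Unit ⊕ ℕ ⊕ ℕ)) by simp))
      simp only [erwFam, Sum.elim_inr, Nat.sub_add_cancel hk]
    · refine erwFilt_le_biSup X A B n _ (by simp) ?_ (fun i _ _ => by simp)
      intro i hi2 hin
      simp only [Set.mem_compl_iff, Set.mem_singleton_iff]
      intro hcon
      rw [Sum.inr.injEq, Sum.inl.injEq] at hcon
      omega
  have hIndB : Indep (MeasurableSpace.comap (B k) inferInstance) (erwFilt X A B n) μ := by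
    have h := indep_biSup_compl h_le hindep' {Sum.inr (Sum.inr (k - 2))}
    rw [iSup_singleton] at h
    have hBk : erwFam X A B (Sum.inr (Sum.inr (k - 2))) =
        MeasurableSpace.comap (B k) inferInstance := by
      simp only [erwFam, Sum.elim_inr, Nat.sub_add_cancel hk]
    rw [hBk] at h
    refine indep_of_indep_of_le_right h ?_
    refine erwFilt_le_biSup X A B n _ (by simp) (fun i _ _ => by simp) ?_
    intro i hi2 hin
    simp only [Set.mem_compl_iff, Set.mem_singleton_iff]
    intro hcon
    rw [Sum.inr.injEq, Sum.inr.injEq] at hcon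
    omega
  -- key conditional-expectation-style integral identity
  have hkey : ∀ (H : Ω → ℝ) (C : ℝ), Measurable[erwFilt X A B n] H → (∀ ω, |H ω| ≤ C) →
      ∫ ω, X k ω * H ω ∂μ = c * ∫ ω, Y ω * H ω ∂μ := by
    intro H C hHF hHC
    have hHm : Measurable H := hHF.mono hF le_rfl
    set W : Ω → ℝ := fun ω => ∑ j ∈ Finset.Icc 1 n, if B k ω = j then erwX' X A B j ω else 0
      with hWdef
    have hWG : Measurable[MeasurableSpace.comap (B k) inferInstance ⊔ erwFilt X A B n] W := by
      refine Finset.measurable_sum _ fun j hj => ?_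
      have hBk : Measurable[MeasurableSpace.comap (B k) inferInstance ⊔ erwFilt X A B n]
          (B k) := (measurable_comap_self (B k)).mono le_sup_left le_rfl
      refine Measurable.ite (hBk (measurableSet_singleton j)) ?_ measurable_const
      exact (erwX'_measurable_le (Finset.mem_Icc.mp hj).1 (Finset.mem_Icc.mp hj).2).mono
        le_sup_right le_rfl
    have hWm : Measurable W := hWG.mono (sup_le (hBmeas k).comap_le hF) le_rfl
    have haeW : ∀ᵐ ω ∂μ, X k ω * H ω = A k ω * (W ω * H ω) ∧ |W ω| ≤ 1 := by
      filter_upwards [hXP, haeB] with ω h1 h2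
      have hBk := h2 k hk
      rw [show k - 1 = n from rfl, Finset.mem_Icc] at hBk
      have hWeq : W ω = erwX' X A B (B k ω) ω := by
        show (∑ j ∈ Finset.Icc 1 n, if B k ω = j then erwX' X A B j ω else 0) = _
        rw [Finset.sum_ite_eq (Finset.Icc 1 n) (B k ω) (fun j => erwX' X A B j ω),
          if_pos (Finset.mem_Icc.2 hBk)]
      have hXb := h1 (B k ω) hBk.1
      refine ⟨by rw [hXrec k hk ω, hWeq, hXb.1]; ring, ?_⟩
      exact le_of_eq (by rw [hWeq, hXb.1, hXb.2])
    have hstep1 : ∫ ω, X k ω * H ω ∂μ = ∫ ω, A k ω * (W ω * H ω) ∂μ :=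
      integral_congr_ae (haeW.mono fun ω h => h.1)
    have haeA1 : ∀ᵐ ω ∂μ, ‖A k ω‖ ≤ 1 := haeA.mono fun ω h => by
      rcases h k hk with h' | h' <;> rw [Real.norm_eq_abs, h'] <;> norm_num
    have hIntA : Integrable (A k) μ :=
      ⟨(hAmeas k).aestronglyMeasurable, HasFiniteIntegral.of_bounded haeA1⟩
    have hIntWH : Integrable (fun ω => W ω * H ω) μ := by
      refine ⟨(hWm.mul hHm).aestronglyMeasurable,
        HasFiniteIntegral.of_bounded (C := C) ?_⟩
      filter_upwards [haeW] with ω h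
      rw [Real.norm_eq_abs, abs_mul]
      calc |W ω| * |H ω| ≤ 1 * C :=
            mul_le_mul h.2 (hHC ω) (abs_nonneg _) zero_le_one
        _ = C := one_mul C
    have hIndFA : IndepFun (A k) (fun ω => W ω * H ω) μ := by
      rw [IndepFun_iff_Indep]
      exact indep_of_indep_of_le_right hIndA
        (Measurable.comap_le (hWG.mul (hHF.mono le_sup_right le_rfl)))
    have hstep2 : ∫ ω, A k ω * (W ω * H ω) ∂μ = c * ∫ ω, W ω * H ω ∂μ := by
      have h := hIndFA.integral_mul_eq_mul_integral hIntA.aestronglyMeasurable hIntWH.aestronglyMeasurable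
      rw [integral_pm_one (hAmeas k) hp0.le hp1 (hA k hk) (hA' k hk)
        (haeA.mono fun ω h => h k hk)] at h
      exact h
    -- expand W * H as a sum and use independence of B k
    have hIntXH : ∀ j ∈ Finset.Icc 1 n, Integrable (fun ω => erwX' X A B j ω * H ω) μ := by
      intro j hj
      obtain ⟨hj1, hjn⟩ := Finset.mem_Icc.mp hj
      have hXjm : Measurable (erwX' X A B j) :=
        (erwX'_measurable_le hj1 hjn).mono hF le_rfl
      refine ⟨(hXjm.mul hHm).aestronglyMeasurable,
        HasFiniteIntegral.of_bounded (C := C) ?_⟩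
      filter_upwards [hXP] with ω h
      rw [Real.norm_eq_abs, abs_mul, (h j hj1).1, (h j hj1).2, one_mul]
      exact hHC ω
    have hIntIte : ∀ j ∈ Finset.Icc 1 n,
        Integrable (fun ω => (if B k ω = j then (1:ℝ) else 0) *
          (erwX' X A B j ω * H ω)) μ := by
      intro j hj
      obtain ⟨hj1, hjn⟩ := Finset.mem_Icc.mp hj
      have hXjm : Measurable (erwX' X A B j) :=
        (erwX'_measurable_le hj1 hjn).mono hF le_rfl
      refine ⟨((Measurable.ite ((hBmeas k) (measurableSet_singleton j)) measurable_const
          measurable_const).mul (hXjm.mul hHm)).aestronglyMeasurable ,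
        HasFiniteIntegral.of_bounded (C := C) ?_⟩
      · filter_upwards [hXP] with ω h
        rw [Real.norm_eq_abs, abs_mul, abs_mul, (h j hj1).1, (h j hj1).2, one_mul]
        calc |if B k ω = j then (1:ℝ) else 0| * |H ω| ≤ 1 * C := by
              refine mul_le_mul ?_ (hHC ω) (abs_nonneg _) zero_le_one
              split <;> simp
          _ = C := one_mul C
    have hexp : ∀ ω, W ω * H ω = ∑ j ∈ Finset.Icc 1 n,
        (if B k ω = j then (1:ℝ) else 0) * (erwX' X A B j ω * H ω) := by
      intro ω
      show (∑ j ∈ Finset.Icc 1 n, if B k ω = j then erwX' X A B j ω else 0) * H ω = _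
      rw [Finset.sum_mul]
      refine Finset.sum_congr rfl fun j _ => ?_
      split <;> ring
    have hstep3 : ∫ ω, W ω * H ω ∂μ = ((n:ℝ))⁻¹ * ∫ ω, T' ω * H ω ∂μ := by
      calc ∫ ω, W ω * H ω ∂μ
          = ∫ ω, ∑ j ∈ Finset.Icc 1 n,
              (if B k ω = j then (1:ℝ) else 0) * (erwX' X A B j ω * H ω) ∂μ := by
            exact integral_congr_ae (Filter.Eventually.of_forall hexp)
        _ = ∑ j ∈ Finset.Icc 1 n, ∫ ω,
              (if B k ω = j then (1:ℝ) else 0) * (erwX' X A B j ω * H ω) ∂μ :=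
            integral_finset_sum _ hIntIte
        _ = ∑ j ∈ Finset.Icc 1 n, ((n:ℝ))⁻¹ * ∫ ω, erwX' X A B j ω * H ω ∂μ := by
            refine Finset.sum_congr rfl fun j hj => ?_
            obtain ⟨hj1, hjn⟩ := Finset.mem_Icc.mp hj
            have hXjm : Measurable (erwX' X A B j) :=
              (erwX'_measurable_le hj1 hjn).mono hF le_rfl
            have hIndFB : IndepFun (fun ω => if B k ω = j then (1:ℝ) else 0)
                (fun ω => erwX' X A B j ω * H ω) μ := by
              rw [IndepFun_iff_Indep]
              refine indep_of_indep_of_le_left (indep_of_indep_of_le_right hIndB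
                (Measurable.comap_le ((erwX'_measurable_le hj1 hjn).mul hHF))) ?_
              refine Measurable.comap_le ?_
              exact Measurable.ite ((measurable_comap_self (B k))
                (measurableSet_singleton j)) measurable_const measurable_const
            have hIntIte1 : Integrable (fun ω => if B k ω = j then (1:ℝ) else 0) μ := by
              refine ⟨(Measurable.ite ((hBmeas k) (measurableSet_singleton j)) measurable_const
                measurable_const).aestronglyMeasurable,
                HasFiniteIntegral.of_bounded (C := 1) (Filter.Eventually.of_forall fun ω => ?_)⟩
              rw [Real.norm_eq_abs]
              split <;> simp
            have h := hIndFB.integral_mul_eq_mul_integral hIntIte1.aestronglyMeasurable (hIntXH j hj).aestronglyMeasurable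
            have hval : ∫ ω, (if B k ω = j then (1:ℝ) else 0) ∂μ = ((n:ℝ))⁻¹ := by
              have heq : (fun ω => if B k ω = j then (1:ℝ) else 0) =
                  Set.indicator (B k ⁻¹' {j}) (fun _ => (1:ℝ)) := by
                funext ω
                by_cases hω : B k ω = j <;> simp [Set.indicator, hω]
              have hμ : μ (B k ⁻¹' {j}) = (((k - 1 : ℕ)) : ℝ≥0∞)⁻¹ :=
                hB k hk j (by rw [show k - 1 = n from rfl]; exact Finset.mem_Icc.2 ⟨hj1, hjn⟩)
              rw [heq, integral_indicator_const _ ((hBmeas k) (measurableSet_singleton j)), measureReal_def, hμ,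
                show k - 1 = n from rfl, smul_eq_mul, mul_one, ENNReal.toReal_inv,
                ENNReal.toReal_natCast]
            have h2 : ∫ ω, (if B k ω = j then (1:ℝ) else 0) * (erwX' X A B j ω * H ω) ∂μ =
                (∫ ω, (if B k ω = j then (1:ℝ) else 0) ∂μ) *
                  ∫ ω, erwX' X A B j ω * H ω ∂μ := h
            rw [h2, hval]
        _ = ((n:ℝ))⁻¹ * ∑ j ∈ Finset.Icc 1 n, ∫ ω, erwX' X A B j ω * H ω ∂μ := by
            rw [Finset.mul_sum]
        _ = ((n:ℝ))⁻¹ * ∫ ω, T' ω * H ω ∂μ := by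
            rw [← integral_finset_sum _ hIntXH]
            congr 1
            refine integral_congr_ae (Filter.Eventually.of_forall fun ω => ?_)
            show _ = T' ω * H ω
            rw [show T' ω = ∑ i ∈ Finset.Icc 1 n, erwX' X A B i ω from rfl, Finset.sum_mul]
    have hstep4 : ∫ ω, Y ω * H ω ∂μ = ((n:ℝ))⁻¹ * ∫ ω, T' ω * H ω ∂μ := by
      have hae : (fun ω => Y ω * H ω) =ᵐ[μ] fun ω => ((n:ℝ))⁻¹ * (T' ω * H ω) := by
        filter_upwards [haeY, haeTT'] with ω h1 h2
        rw [h1, h2.1]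
        field_simp
      rw [integral_congr_ae hae, integral_const_mul]
    rw [hstep1, hstep2, hstep3, ← hstep4]
  -- main functions
  set f : Ω → ℝ := fun ω => (erwM p q X k ω - erwM p q X n ω) ^ 3 with hfdef
  set g' : Ω → ℝ := fun ω => 2*c*a^3*(-(Y ω) + c^2*(Y ω)^3) with hg'def
  have hMk : Measurable (fun ω => erwM p q X k ω) := by
    simp only [erwM, if_neg (show ¬ k = 0 by omega)]
    exact (measurable_const.mul (Finset.measurable_sum _ fun i _ => hXmeas i)).sub
      measurable_const
  have hMn : Measurable (fun ω => erwM p q X n ω) := by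
    simp only [erwM, if_neg (show ¬ n = 0 by omega)]
    exact (measurable_const.mul (Finset.measurable_sum _ fun i _ => hXmeas i)).sub
      measurable_const
  have hfm : Measurable f := (hMk.sub hMn).pow_const 3
  have hfb : ∀ᵐ ω ∂μ, ‖f ω‖ ≤ (2*a)^3 := by
    filter_upwards [hXP, haeTT'] with ω h1 h2
    have hXk : |X k ω| = 1 := (h1 k (by omega)).2
    have hTn : |T ω / (n:ℝ)| ≤ 1 := by
      rw [abs_div, abs_of_pos hnpos, div_le_one hnpos]; exact h2.2
    have hΔb : |erwM p q X k ω - erwM p q X n ω| ≤ 2*a := by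
      rw [hΔ ω, abs_mul, abs_of_pos hapos]
      have htri := abs_add_le (X k ω) (-(c * (T ω / (n:ℝ))))
      rw [abs_neg, ← sub_eq_add_neg] at htri
      have : |c * (T ω / (n:ℝ))| ≤ 1 := by
        rw [abs_mul]
        calc |c| * |T ω / (n:ℝ)| ≤ 1 * 1 :=
              mul_le_mul hcabs hTn (abs_nonneg _) zero_le_one
          _ = 1 := one_mul 1
      nlinarith [abs_nonneg (X k ω - c * (T ω / (n:ℝ)))]
    rw [Real.norm_eq_abs]
    show |(erwM p q X k ω - erwM p q X n ω) ^ 3| ≤ (2*a)^3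
    rw [abs_pow]
    exact pow_le_pow_left₀ (abs_nonneg _) hΔb 3
  have hfInt : Integrable f μ := ⟨hfm.aestronglyMeasurable, HasFiniteIntegral.of_bounded hfb⟩
  have hg'F : Measurable[erwFilt X A B n] g' := by
    refine Measurable.const_mul ?_ _
    exact (hYF.neg).add ((hYF.pow_const 3).const_mul _)
  have hg'm : Measurable g' := hg'F.mono hF le_rfl
  have habs_y3 : ∀ ω, |(-(Y ω) + c^2*(Y ω)^3)| ≤ 2 := by
    intro ω
    have htri := abs_add_le (-(Y ω)) (c^2*(Y ω)^3)
    rw [abs_neg] at htri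
    have h2 : |c^2*(Y ω)^3| ≤ 1 := by
      rw [abs_mul, abs_pow, abs_pow]
      exact hmul_le_one _ _ (pow_nonneg (abs_nonneg _) _) (hcp 2)
        (pow_nonneg (abs_nonneg _) _) (hyp ω 3)
    linarith [hYle ω]
  have hg'b : ∀ ω, ‖g' ω‖ ≤ |2*c*a^3| * 2 := by
    intro ω
    rw [Real.norm_eq_abs]
    show |2*c*a^3*(-(Y ω) + c^2*(Y ω)^3)| ≤ |2*c*a^3| * 2
    rw [abs_mul]
    exact mul_le_mul_of_nonneg_left (habs_y3 ω) (abs_nonneg _)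
  have hg'Int : Integrable g' μ :=
    ⟨hg'm.aestronglyMeasurable,
      HasFiniteIntegral.of_bounded (Filter.Eventually.of_forall hg'b)⟩
  -- set-integral identity
  have hg_eq : ∀ s : Set Ω, MeasurableSet[erwFilt X A B n] s → μ s < ⊤ →
      ∫ x in s, g' x ∂μ = ∫ x in s, f x ∂μ := by
    intro s hs _
    have hs' : MeasurableSet s := hF s hs
    set ind : Ω → ℝ := Set.indicator s (fun _ => (1:ℝ)) with hinddef
    have hindF : Measurable[erwFilt X A B n] ind := measurable_const.indicator hs
    have hindm : Measurable ind := measurable_const.indicator hs'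
    have hind1 : ∀ ω, |ind ω| ≤ 1 := by
      intro ω
      by_cases h : ω ∈ s
      · rw [hinddef, Set.indicator_of_mem h]; norm_num
      · rw [hinddef, Set.indicator_of_notMem h]; norm_num
    set H1 : Ω → ℝ := fun ω => a^3*(1 + 3*c^2*(Y ω)^2) * ind ω with hH1def
    have hH1F : Measurable[erwFilt X A B n] H1 :=
      (measurable_const.mul (measurable_const.add ((hYF.pow_const 2).const_mul _))).mul hindF
    have hH1m : Measurable H1 := hH1F.mono hF le_rfl
    have hmid : ∀ ω, |1 + 3*c^2*(Y ω)^2| ≤ 4 := by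
      intro ω
      rw [abs_of_nonneg (by positivity)]
      have hc2 : c^2 ≤ 1 := by rw [← sq_abs]; exact hcp 2
      have hy2 : (Y ω)^2 ≤ 1 := by rw [← sq_abs]; exact hyp ω 2
      nlinarith [hc2, hy2, sq_nonneg (Y ω), sq_nonneg c]
    have hH1b : ∀ ω, |H1 ω| ≤ a^3*4 := by
      intro ω
      show |a^3*(1 + 3*c^2*(Y ω)^2) * ind ω| ≤ a^3*4
      rw [abs_mul, abs_mul, abs_of_pos (pow_pos hapos 3)]
      calc a^3 * |1 + 3*c^2*(Y ω)^2| * |ind ω| ≤ a^3 * 4 * 1 := by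
            refine mul_le_mul ?_ (hind1 ω) (abs_nonneg _) (by positivity)
            exact mul_le_mul_of_nonneg_left (hmid ω) (le_of_lt (pow_pos hapos 3))
        _ = a^3*4 := mul_one _
    have hkey1 := hkey H1 (a^3*4) hH1F hH1b
    set R : Ω → ℝ := fun ω => a^3*(3*c*(Y ω) + c^3*(Y ω)^3) * ind ω with hRdef
    have hRm : Measurable R :=
      (measurable_const.mul (((hYm.const_mul _)).add ((hYm.pow_const 3).const_mul _))).mul hindm
    have hRb : ∀ ω, |R ω| ≤ a^3*4*4 := by
      intro ω
      show |a^3*(3*c*(Y ω) + c^3*(Y ω)^3) * ind ω| ≤ a^3*4*4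
      rw [abs_mul, abs_mul, abs_of_pos (pow_pos hapos 3)]
      have hb : |3*c*(Y ω) + c^3*(Y ω)^3| ≤ 4 := by
        have htri := abs_add_le (3*c*(Y ω)) (c^3*(Y ω)^3)
        have e1 : |3*c*(Y ω)| ≤ 3 := by
          rw [abs_mul, abs_mul, show |(3:ℝ)| = 3 by norm_num]
          nlinarith [hYle ω, hcabs, abs_nonneg c, abs_nonneg (Y ω)]
        have e2 : |c^3*(Y ω)^3| ≤ 1 := by
          rw [abs_mul, abs_pow, abs_pow]
          exact hmul_le_one _ _ (pow_nonneg (abs_nonneg _) _) (hcp 3)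
            (pow_nonneg (abs_nonneg _) _) (hyp ω 3)
        linarith
      calc a^3 * |3*c*(Y ω) + c^3*(Y ω)^3| * |ind ω| ≤ a^3 * 4 * 1 := by
            refine mul_le_mul ?_ (hind1 ω) (abs_nonneg _) (by positivity)
            exact mul_le_mul_of_nonneg_left hb (le_of_lt (pow_pos hapos 3))
        _ ≤ a^3*4*4 := by nlinarith [pow_pos hapos 3]
    have hIntR : Integrable R μ :=
      ⟨hRm.aestronglyMeasurable, HasFiniteIntegral.of_bounded
        (Filter.Eventually.of_forall fun ω => by rw [Real.norm_eq_abs]; exact hRb ω)⟩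
    have hIntXH1 : Integrable (fun ω => X k ω * H1 ω) μ := by
      refine ⟨((hXmeas k).mul hH1m).aestronglyMeasurable,
        HasFiniteIntegral.of_bounded (C := a^3*4) ?_⟩
      filter_upwards [hXP] with ω h
      rw [Real.norm_eq_abs, abs_mul, (h k (by omega)).2, one_mul]
      exact hH1b ω
    have hIntYH1 : Integrable (fun ω => Y ω * H1 ω) μ := by
      refine ⟨(hYm.mul hH1m).aestronglyMeasurable,
        HasFiniteIntegral.of_bounded (C := a^3*4)
          (Filter.Eventually.of_forall fun ω => ?_)⟩
      rw [Real.norm_eq_abs, abs_mul]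
      calc |Y ω| * |H1 ω| ≤ 1 * (a^3*4) :=
            mul_le_mul (hYle ω) (hH1b ω) (abs_nonneg _) zero_le_one
        _ = a^3*4 := one_mul _
    have hfae2 : (fun ω => f ω * ind ω) =ᵐ[μ] fun ω => X k ω * H1 ω - R ω := by
      filter_upwards [hXP, haeY] with ω h1 h3
      have hXk2 : (X k ω)^2 = 1 := by
        have h := (h1 k (by omega)).2
        rw [← sq_abs, h]; norm_num
      show (erwM p q X k ω - erwM p q X n ω) ^ 3 * ind ω =
        X k ω * (a^3*(1 + 3*c^2*(Y ω)^2) * ind ω) - a^3*(3*c*(Y ω) + c^3*(Y ω)^3) * ind ω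
      rw [hΔ ω, ← h3]
      linear_combination (ind ω * a^3 * (X k ω - 3*c*(Y ω))) * hXk2
    have hindg : ∀ (φ : Ω → ℝ), Set.indicator s φ = fun x => φ x * ind x := by
      intro φ
      funext x
      by_cases h : x ∈ s
      · rw [Set.indicator_of_mem h, hinddef, Set.indicator_of_mem h, mul_one]
      · rw [Set.indicator_of_notMem h, hinddef, Set.indicator_of_notMem h, mul_zero]
    calc ∫ x in s, g' x ∂μ = ∫ x, Set.indicator s g' x ∂μ := (integral_indicator hs').symm
      _ = ∫ x, g' x * ind x ∂μ := by rw [hindg g']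
      _ = ∫ x, (c * (Y x * H1 x) - R x) ∂μ := by
          refine integral_congr_ae (Filter.Eventually.of_forall fun x => ?_)
          show 2*c*a^3*(-(Y x) + c^2*(Y x)^3) * ind x =
            c * (Y x * (a^3*(1 + 3*c^2*(Y x)^2) * ind x)) -
              a^3*(3*c*(Y x) + c^3*(Y x)^3) * ind x
          ring
      _ = c * ∫ x, Y x * H1 x ∂μ - ∫ x, R x ∂μ := by
          rw [integral_sub (hIntYH1.const_mul c) hIntR, integral_const_mul]
      _ = ∫ x, X k x * H1 x ∂μ - ∫ x, R x ∂μ := by rw [← hkey1]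
      _ = ∫ x, (X k x * H1 x - R x) ∂μ := (integral_sub hIntXH1 hIntR).symm
      _ = ∫ x, f x * ind x ∂μ := (integral_congr_ae hfae2).symm
      _ = ∫ x, Set.indicator s f x ∂μ := by rw [hindg f]
      _ = ∫ x in s, f x ∂μ := integral_indicator hs'
  have hgm : AEStronglyMeasurable[erwFilt X A B n] g' μ :=
    (hg'F.stronglyMeasurable).aestronglyMeasurable
  have hcond : g' =ᵐ[μ] μ[f|erwFilt X A B n] :=
    ae_eq_condExp_of_forall_setIntegral_eq hF hfInt
      (fun s _ _ => hg'Int.integrableOn) hg_eq hgm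
  have hpart1 : μ[f|erwFilt X A B n] =ᵐ[μ] fun ω =>
      2 * c * a ^ 3 *
        (-((∑ i ∈ Finset.Icc 1 n, X i ω) / ((k : ℝ) - 1)) +
          c ^ 2 * (∑ i ∈ Finset.Icc 1 n, X i ω) ^ 3 / ((k : ℝ) - 1) ^ 3) := by
    refine hcond.symm.trans ?_
    filter_upwards [haeY] with ω h1
    show 2*c*a^3*(-(Y ω) + c^2*(Y ω)^3) = _
    rw [h1, hnR]
    have hkne : (k:ℝ) - 1 ≠ 0 := by rw [← hnR]; exact hnne
    first
      | (field_simp; ring)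
      | field_simp
  constructor
  · exact hpart1
  · filter_upwards [hpart1, haeY, haeTT'] with ω hωc hωY hωT
    rw [hωc]
    have hy : |T ω / ((k:ℝ) - 1)| ≤ 1 := by
      rw [← hnR, abs_div, abs_of_pos hnpos, div_le_one hnpos]
      exact hωT.2
    show |2 * c * a ^ 3 * (-(T ω / ((k:ℝ)-1)) + c ^ 2 * (T ω) ^ 3 / ((k:ℝ)-1) ^ 3)| ≤
      4 * a ^ 3 * |T ω / ((k:ℝ)-1)|
    have hkne : (k:ℝ) - 1 ≠ 0 := by rw [← hnR]; exact hnne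
    have hfactor : -(T ω / ((k:ℝ)-1)) + c ^ 2 * (T ω) ^ 3 / ((k:ℝ)-1) ^ 3 =
        (T ω / ((k:ℝ)-1)) * (c^2 * (T ω / ((k:ℝ)-1))^2 - 1) := by
      first
        | (field_simp; ring)
        | field_simp
    set y := T ω / ((k:ℝ)-1) with hydef
    rw [hfactor, abs_mul (2*c*a^3) _, abs_mul y _]
    have hc2 : c^2 ≤ 1 := by rw [← sq_abs]; exact hcp 2
    have hy2 : y^2 ≤ 1 := by rw [← sq_abs]; exact pow_le_one₀ (abs_nonneg _) hy
    have h2 : |c^2 * y^2 - 1| ≤ 1 := by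
      rw [abs_le]
      constructor
      · nlinarith [sq_nonneg (c*y)]
      · nlinarith [hc2, hy2, sq_nonneg y, sq_nonneg c]
    have h3 : |2*c*a^3| ≤ 2 * a^3 := by
      rw [abs_mul, abs_mul, show |(2:ℝ)| = 2 by norm_num, abs_of_pos (pow_pos hapos 3)]
      nlinarith [pow_pos hapos 3, hcabs, abs_nonneg c]
    calc |2*c*a^3| * (|y| * |c^2*y^2 - 1|)
        ≤ (2*a^3) * (|y| * 1) := by
          refine mul_le_mul h3 ?_ (by positivity) (by positivity)
          exact mul_le_mul_of_nonneg_left h2 (abs_nonneg _)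
      _ = 2*a^3*|y| := by ring
      _ ≤ 4*a^3*|y| := by nlinarith [pow_pos hapos 3, abs_nonneg y]
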